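/- Under the assumptions that for each tested index i the family (p_j) of vectors paired with i is linearly independent and all k_{ij}, ⟨p_i,p_j⟩ ∈ (0,1), a point is a critical point of the BCE loss ℓ((p_i)) = ∑_{(i,j)∈P} BCE(k_{ij} | ⟨p_i,p_j⟩) if and only if it is a critical point of the squared-error loss ℓ_s((p_i)) = ∑_{(i,j)∈P} (k_{ij} - ⟨p_i,p_j⟩)²; both hold exactly when ⟨p_i,p_j⟩ = k_{ij} for all tested pairs. -/
import Mathlib

lemma sum_filter_zero_iff {K : ℕ} {ι : Type*} [Fintype ι] [DecidableEq ι]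
    (P : Finset (ι × ι)) (p : ι → (Fin K → ℝ)) (i : ι)
    (hli : LinearIndependent ℝ (fun j : {j // (i, j) ∈ P} => p j.1))
    (c : ι → ℝ) :
    (∑ j ∈ Finset.univ.filter (fun j => (i, j) ∈ P), c j • p j) = 0 ↔
      ∀ j, (i, j) ∈ P → c j = 0 := by
  have hsum : (∑ j ∈ Finset.univ.filter (fun j => (i, j) ∈ P), c j • p j)
      = ∑ j : {j // (i, j) ∈ P}, c j.1 • p j.1 := by
    rw [Finset.sum_subtype (p := fun j => (i, j) ∈ P)]
    intro x; simp
  rw [hsum]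
  constructor
  · intro h j hj
    exact (Fintype.linearIndependent_iff.mp hli) (fun j => c j.1) h ⟨j, hj⟩
  · intro h
    apply Finset.sum_eq_zero
    intro j _
    rw [h j.1 j.2, zero_smul]

lemma coeff_bce_zero_iff {x t : ℝ} (hx : x ∈ Set.Ioo (0:ℝ) 1)
    (ht : t ∈ Set.Ioo (0:ℝ) 1) :
    t / x - (1 - t) / (1 - x) = 0 ↔ x = t := by
  obtain ⟨hx0, hx1⟩ := hx
  have hx1' : (1:ℝ) - x ≠ 0 := by linarith
  have hx0' : x ≠ 0 := ne_of_gt hx0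
  rw [sub_eq_zero, div_eq_div_iff hx0' hx1']
  constructor <;> intro h <;> nlinarith

theorem prop1_bce_se_equivalence {K : ℕ} {ι : Type*} [Fintype ι] [DecidableEq ι]
    (P : Finset (ι × ι)) (p : ι → (Fin K → ℝ)) (k : ι → ι → ℝ)
    (hk : ∀ e ∈ P, k e.1 e.2 ∈ Set.Ioo (0:ℝ) 1)
    (hdot : ∀ e ∈ P, (∑ c, p e.1 c * p e.2 c) ∈ Set.Ioo (0:ℝ) 1)
    (hli : ∀ i, LinearIndependent ℝ (fun j : {j // (i, j) ∈ P} => p j.1)) :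
    ((∀ i, -(∑ j ∈ Finset.univ.filter (fun j => (i, j) ∈ P),
        (k i j / (∑ c, p i c * p j c) -
          (1 - k i j) / (1 - ∑ c, p i c * p j c)) • p j) = 0) ↔
      (∀ i, -(2:ℝ) • (∑ j ∈ Finset.univ.filter (fun j => (i, j) ∈ P),
        (k i j - ∑ c, p i c * p j c) • p j) = 0)) ∧
    ((∀ i, -(∑ j ∈ Finset.univ.filter (fun j => (i, j) ∈ P),
        (k i j / (∑ c, p i c * p j c) -
          (1 - k i j) / (1 - ∑ c, p i c * p j c)) • p j) = 0) ↔
      (∀ e ∈ P, (∑ c, p e.1 c * p e.2 c) = k e.1 e.2)) := by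
  have hB : (∀ i, -(∑ j ∈ Finset.univ.filter (fun j => (i, j) ∈ P),
        (k i j / (∑ c, p i c * p j c) -
          (1 - k i j) / (1 - ∑ c, p i c * p j c)) • p j) = 0) ↔
      (∀ e ∈ P, (∑ c, p e.1 c * p e.2 c) = k e.1 e.2) := by
    constructor
    · intro h e he
      have hi := h e.1
      rw [neg_eq_zero, sum_filter_zero_iff P p e.1 (hli e.1)] at hi
      have := hi e.2 (by simpa using he)
      exact (coeff_bce_zero_iff (hdot e he) (hk e he)).mp this
    · intro h i
      rw [neg_eq_zero, sum_filter_zero_iff P p i (hli i)]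
      intro j hj
      exact (coeff_bce_zero_iff (hdot (i, j) hj) (hk (i, j) hj)).mpr (h (i, j) hj)
  have hS : (∀ i, -(2:ℝ) • (∑ j ∈ Finset.univ.filter (fun j => (i, j) ∈ P),
        (k i j - ∑ c, p i c * p j c) • p j) = 0) ↔
      (∀ e ∈ P, (∑ c, p e.1 c * p e.2 c) = k e.1 e.2) := by
    constructor
    · intro h e he
      have hi := h e.1
      rw [smul_eq_zero] at hi
      rcases hi with hi | hi
      · norm_num at hi
      · rw [sum_filter_zero_iff P p e.1 (hli e.1)] at hi
        have := hi e.2 (by simpa using he)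
        linarith [this]
    · intro h i
      have : (∑ j ∈ Finset.univ.filter (fun j => (i, j) ∈ P),
          (k i j - ∑ c, p i c * p j c) • p j) = 0 := by
        rw [sum_filter_zero_iff P p i (hli i)]
        intro j hj
        have := h (i, j) hj
        simp at this ⊢
        linarith
      rw [this, smul_zero]
  exact ⟨hB.trans hS.symm, hB⟩
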